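/- Let P* = v_0…v_k be a rainbow path in a properly edge-colored graph with colors c_i = c(v_{i-1}v_i). Suppose v_0 v_i ∈ E(G) with c(v_0 v_i) = c_j for some 1 ≤ j < i, and v_k v_j ∈ E(G) with c(v_k v_j) ∉ {c_1,…,c_k}. Then v_{j+1} v_{j+2} … v_i v_0 v_1 … v_j v_k v_{k-1} … v_{i+1} is a rainbow path of length k on vertex set {v_0,…,v_k} with terminal vertex v_{i+1}. -/

import Mathlib

open SimpleGraph

namespace SimpleGraph.Walk

variable {V : Type*} {G : SimpleGraph V}

/-- The segment of a walk from vertex index `a` to `a + n`. -/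
def seg {u v : V} (w : G.Walk u v) : (a n : ℕ) → a + n ≤ w.length →
    G.Walk (w.getVert a) (w.getVert (a + n))
  | _, 0, _ => Walk.nil
  | a, n + 1, h => (seg w a n (by omega)).concat (w.adj_getVert_succ (by omega))

theorem seg_length {u v : V} (w : G.Walk u v) (a n : ℕ) (h : a + n ≤ w.length) :
    (w.seg a n h).length = n := by
  induction n with
  | zero => rfl
  | succ n ih => simp [seg, length_concat, ih]

theorem seg_support {u v : V} (w : G.Walk u v) (a n : ℕ) (h : a + n ≤ w.length) :
    (w.seg a n h).support = (List.range (n + 1)).map (fun t => w.getVert (a + t)) := by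
  induction n with
  | zero => simp [seg, List.range_succ]
  | succ n ih =>
    rw [seg, support_concat, ih (by omega), List.range_succ (n := n + 1)]
    simp

theorem seg_edges {u v : V} (w : G.Walk u v) (a n : ℕ) (h : a + n ≤ w.length) :
    (w.seg a n h).edges =
      (List.range n).map (fun t => s(w.getVert (a + t), w.getVert (a + t + 1))) := by
  induction n with
  | zero => simp [seg]
  | succ n ih =>
    rw [seg, edges_concat, ih (by omega), List.range_succ (n := n)]
    simp only [List.map_append, List.map_cons, List.map_nil, List.concat_eq_append]
    rfl

theorem support_eq_map_range {u v : V} (w : G.Walk u v) :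
    w.support = (List.range (w.length + 1)).map w.getVert := by
  induction w with
  | nil => simp [List.range_succ]
  | cons h p ih =>
    rw [support_cons, ih, length_cons, List.range_succ_eq_map (n := p.length + 1)]
    simp [getVert_cons_succ, List.map_map, Function.comp_def]

theorem edges_eq_map_range {u v : V} (w : G.Walk u v) :
    w.edges = (List.range w.length).map (fun t => s(w.getVert t, w.getVert (t + 1))) := by
  induction w with
  | nil => simp
  | cons h p ih =>
    rw [edges_cons, ih, length_cons, List.range_succ_eq_map (n := p.length)]
    simp [getVert_cons_succ, List.map_map, Function.comp_def, getVert_zero]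

end SimpleGraph.Walk

/-- A proper edge-coloring: edges sharing a vertex receive distinct colors. -/
def ProperEdgeColoring {V : Type*} (G : SimpleGraph V) (c : Sym2 V → ℕ) : Prop :=
  ∀ ⦃u v w : V⦄, G.Adj u v → G.Adj u w → v ≠ w → c s(u, v) ≠ c s(u, w)

/-- Claim `nice_edges`, case `j < i`. Let `p = v_0 … v_k` be
a rainbow path in a properly edge-colored graph. Suppose `v_0 v_i ∈ E(G)` with
`c(v_0 v_i) = c_j` for some `1 ≤ j < i`, and `v_k v_j ∈ E(G)` with `c(v_k v_j)`
not among the colors of `p`. Then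
`v_{j+1} v_{j+2} … v_i v_0 v_1 … v_j v_k v_{k-1} … v_{i+1}` is a rainbow path of
length `k` on the vertex set `{v_0,…,v_k}`, i.e. there is a rainbow path of
length `k` on that vertex set with terminal vertices `v_{j+1}` and `v_{i+1}`. -/
theorem nice_edge_terminal_lt {V : Type*} [DecidableEq V]
    (G : SimpleGraph V) (c : Sym2 V → ℕ) (k : ℕ)
    (hproper : ProperEdgeColoring G c)
    (v₀ vₖ : V) (p : G.Walk v₀ vₖ) (hp : p.IsPath) (hlen : p.length = k)
    (hrb : (p.edges.map c).Nodup)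
    (i j : ℕ) (hj : 1 ≤ j) (hji : j < i) (hik : i ≤ k - 1)
    (hadj : G.Adj v₀ (p.getVert i))
    (hcol : c s(v₀, p.getVert i) = c s(p.getVert j, p.getVert (j + 1)))
    (hadj' : G.Adj vₖ (p.getVert j))
    (hnew : c s(vₖ, p.getVert j) ∉ p.edges.map c) :
    ∃ q : G.Walk (p.getVert (j + 1)) (p.getVert (i + 1)),
      q.IsPath ∧ q.length = k ∧ q.support.toFinset = p.support.toFinset ∧
      (q.edges.map c).Nodup := by
  classical
  have hik' : i + 1 ≤ k := by omega
  have hv0 : p.getVert 0 = v₀ := p.getVert_zero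
  have hvk : p.getVert k = vₖ := by rw [← hlen]; exact p.getVert_length
  have hplen : i + 1 ≤ p.length := by omega
  -- the three segments
  let A : G.Walk (p.getVert (j + 1)) (p.getVert i) :=
    (p.seg (j + 1) (i - (j + 1)) (by omega)).copy rfl (by congr 1; omega)
  let B : G.Walk (p.getVert 0) (p.getVert j) :=
    (p.seg 0 j (by omega)).copy rfl (by congr 1; omega)
  let C : G.Walk (p.getVert (i + 1)) (p.getVert k) :=
    (p.seg (i + 1) (k - (i + 1)) (by omega)).copy rfl (by congr 1; omega)
  have h1 : G.Adj (p.getVert i) (p.getVert 0) := by rw [hv0]; exact hadj.symm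
  have h2 : G.Adj (p.getVert j) (p.getVert k) := by rw [hvk]; exact hadj'.symm
  let q : G.Walk (p.getVert (j + 1)) (p.getVert (i + 1)) :=
    A.append (Walk.cons h1 (B.append (Walk.cons h2 C.reverse)))
  -- index lists
  let L₁ : List ℕ := (List.range (i - (j + 1))).map (fun t => j + 1 + t)
  let L₂ : List ℕ := (List.range j).map (fun t => 0 + t)
  let L₃ : List ℕ := (List.range (k - (i + 1))).map (fun t => i + 1 + t)
  let f : ℕ → ℕ := fun t => c s(p.getVert t, p.getVert (t + 1))
  -- scalar color facts
  have e1 : c s(p.getVert i, p.getVert 0) = f j := by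
    show c s(p.getVert i, p.getVert 0) = c s(p.getVert j, p.getVert (j + 1))
    rw [Sym2.eq_swap, hv0, hcol]
  have e2 : c s(p.getVert j, p.getVert k) = c s(vₖ, p.getVert j) := by
    rw [Sym2.eq_swap, hvk]
  -- edges/colors of q
  have hqe : q.edges.map c =
      ((L₁ ++ j :: L₂).map f) ++
        c s(vₖ, p.getVert j) :: ((L₃.map f).reverse) := by
    simp only [q, A, B, C, Walk.edges_append, Walk.edges_cons, Walk.edges_reverse,
      Walk.edges_copy, Walk.seg_edges, List.map_append, List.map_cons, List.map_map,
      List.map_reverse, List.append_assoc, List.cons_append, L₁, L₂, L₃, f,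
      Function.comp_def, e1, e2]
  -- p's colors
  have hpc : p.edges.map c = (List.range k).map f := by
    rw [Walk.edges_eq_map_range, hlen, List.map_map]
    rfl
  have hrb' : ((List.range k).map f).Nodup := by rwa [hpc] at hrb
  have hnew' : c s(vₖ, p.getVert j) ∉ (List.range k).map f := by rwa [hpc] at hnew
  -- index list for colors
  let J : List ℕ := (L₁ ++ j :: L₂) ++ L₃.reverse
  have hJmem : ∀ x, x ∈ J ↔ (x < k ∧ x ≠ i) := by
    intro x
    simp only [J, L₁, L₂, L₃, List.mem_append, List.mem_cons, List.mem_reverse,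
      List.mem_map, List.mem_range]
    constructor
    · rintro ((⟨t, ht, rfl⟩ | rfl | ⟨t, ht, rfl⟩) | ⟨t, ht, rfl⟩) <;> omega
    · rintro ⟨hx, hxi⟩
      by_cases h : x < j
      · exact Or.inl (Or.inr (Or.inr ⟨x, by omega, by omega⟩))
      · by_cases h' : x = j
        · exact Or.inl (Or.inr (Or.inl h'))
        · by_cases h'' : x < i
          · exact Or.inl (Or.inl ⟨x - (j + 1), by omega, by omega⟩)
          · exact Or.inr ⟨x - (i + 1), by omega, by omega⟩
  have hJnd : J.Nodup := by
    have n1 : L₁.Nodup := (@List.nodup_range _).map (fun a b h => by omega)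
    have n2 : L₂.Nodup := (@List.nodup_range _).map (fun a b h => by omega)
    have n3 : L₃.Nodup := (@List.nodup_range _).map (fun a b h => by omega)
    have m1 : ∀ x ∈ L₁, j + 1 ≤ x ∧ x < i := by
      simp only [L₁, List.mem_map, List.mem_range]; rintro x ⟨t, ht, rfl⟩; omega
    have m2 : ∀ x ∈ L₂, x < j := by
      simp only [L₂, List.mem_map, List.mem_range]; rintro x ⟨t, ht, rfl⟩; omega
    have m3 : ∀ x ∈ L₃, i + 1 ≤ x := by
      simp only [L₃, List.mem_map, List.mem_range]; rintro x ⟨t, ht, rfl⟩; omega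
    refine List.Nodup.append (List.Nodup.append n1 (List.nodup_cons.mpr ⟨?_, n2⟩) ?_)
      (List.nodup_reverse.mpr n3) ?_
    · intro hjm; have := m2 j hjm; omega
    · intro x hx1 hx2
      rcases List.mem_cons.mp hx2 with rfl | hx2
      · have := m1 x hx1; omega
      · have := m1 x hx1; have := m2 x hx2; omega
    · intro x hx1 hx3
      have h3 := m3 x (List.mem_reverse.mp hx3)
      rcases List.mem_append.mp hx1 with hx | hx
      · have := m1 x hx; omega
      · rcases List.mem_cons.mp hx with rfl | hx
        · omega
        · have := m2 x hx; omega
  have herasemem : ∀ x, x ∈ (List.range k).erase i ↔ (x < k ∧ x ≠ i) := by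
    intro x
    rw [(@List.nodup_range k).mem_erase_iff, List.mem_range]
    tauto
  have hJperm : List.Perm J ((List.range k).erase i) := by
    refine List.perm_of_nodup_nodup_toFinset_eq hJnd ((@List.nodup_range k).erase i) ?_
    ext x
    simp only [List.mem_toFinset, hJmem, herasemem]
  -- colors nodup
  have hcolors : (q.edges.map c).Nodup := by
    rw [hqe]
    rw [(List.perm_middle (a := c s(vₖ, p.getVert j))
      (l₁ := (L₁ ++ j :: L₂).map f) (l₂ := (L₃.map f).reverse)).nodup_iff]
    rw [List.nodup_cons]
    constructor
    · intro hmem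
      apply hnew'
      rcases List.mem_append.mp hmem with hx | hx
      · obtain ⟨t, ht, heq⟩ := List.mem_map.mp hx
        have htk : t < k := ((hJmem t).mp (List.mem_append_left _ ht)).1
        exact heq ▸ List.mem_map.mpr ⟨t, List.mem_range.mpr htk, rfl⟩
      · obtain ⟨t, ht, heq⟩ := List.mem_map.mp (List.mem_reverse.mp hx)
        have htk : t < k := ((hJmem t).mp (List.mem_append_right _
          (List.mem_reverse.mpr ht))).1
        exact heq ▸ List.mem_map.mpr ⟨t, List.mem_range.mpr htk, rfl⟩
    · have : ((L₁ ++ j :: L₂).map f) ++ (L₃.map f).reverse = J.map f := by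
        simp only [J, List.map_append, List.map_reverse]
      rw [this]
      have hsub : List.Sublist (((List.range k).erase i).map f) ((List.range k).map f) :=
        ((List.range k).erase_sublist).map f
      exact ((hJperm.map f).nodup_iff).mpr (hrb'.sublist hsub)
  -- support
  let Js : List ℕ := ((List.range (i - (j + 1) + 1)).map (fun t => j + 1 + t)) ++
      ((List.range (j + 1)).map (fun t => 0 + t)) ++
      (((List.range (k - (i + 1) + 1)).map (fun t => i + 1 + t)).reverse)
  have hqs : q.support = Js.map p.getVert := by
    simp only [q, A, B, C, Walk.support_append, Walk.support_cons, Walk.support_reverse,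
      Walk.support_copy, Walk.seg_support, List.tail_cons, Js, List.map_append,
      List.map_map, List.map_reverse, List.append_assoc, Function.comp_def]
  have hJsmem : ∀ x, x ∈ Js ↔ x < k + 1 := by
    intro x
    simp only [Js, List.mem_append, List.mem_reverse, List.mem_map, List.mem_range]
    constructor
    · rintro ((⟨t, ht, rfl⟩ | ⟨t, ht, rfl⟩) | ⟨t, ht, rfl⟩) <;> omega
    · intro hx
      by_cases h : x ≤ j
      · exact Or.inl (Or.inr ⟨x, by omega, by omega⟩)
      · by_cases h' : x ≤ i
        · exact Or.inl (Or.inl ⟨x - (j + 1), by omega, by omega⟩)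
        · exact Or.inr ⟨x - (i + 1), by omega, by omega⟩
  have hJsnd : Js.Nodup := by
    have n1 := (@List.nodup_range (i - (j + 1) + 1)).map
      (fun (a b : ℕ) (h : j + 1 + a = j + 1 + b) => by omega)
    have n2 := (@List.nodup_range (j + 1)).map
      (fun (a b : ℕ) (h : 0 + a = 0 + b) => by omega)
    have n3 := (@List.nodup_range (k - (i + 1) + 1)).map
      (fun (a b : ℕ) (h : i + 1 + a = i + 1 + b) => by omega)
    refine List.Nodup.append (List.Nodup.append n1 n2 ?_) (List.nodup_reverse.mpr n3) ?_
    · intro x hx1 hx2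
      simp only [List.mem_map, List.mem_range] at hx1 hx2
      obtain ⟨t, ht, rfl⟩ := hx1; obtain ⟨s, hs, hx⟩ := hx2; omega
    · intro x hx1 hx3
      rw [List.mem_reverse] at hx3
      simp only [List.mem_append, List.mem_map, List.mem_range] at hx1 hx3
      obtain ⟨s, hs, hx⟩ := hx3
      rcases hx1 with ⟨t, ht, rfl⟩ | ⟨t, ht, rfl⟩ <;> omega
  have hJsperm : List.Perm Js (List.range (k + 1)) := by
    refine List.perm_of_nodup_nodup_toFinset_eq hJsnd (@List.nodup_range _) ?_
    ext x
    simp only [List.mem_toFinset, hJsmem, List.mem_range]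
  have hps : p.support = (List.range (k + 1)).map p.getVert := by
    rw [Walk.support_eq_map_range, hlen]
  have hsupperm : List.Perm q.support p.support := by
    rw [hqs, hps]; exact hJsperm.map p.getVert
  refine ⟨q, ?_, ?_, ?_, hcolors⟩
  · rw [Walk.isPath_def]
    exact (hsupperm.nodup_iff).mpr hp.support_nodup
  · simp only [q, A, B, C, Walk.length_append, Walk.length_cons, Walk.length_reverse,
      Walk.length_copy, Walk.seg_length]
    omega
  · exact List.toFinset_eq_of_perm _ _ hsupperm
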